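/- For every deterministic skip free path M (a sequence (M_n)_{n≥0} with M_0 = 0 and M_n − M_{n−1} ∈ {−1,0,1}) and every a ∈ {0, 1, 2}, the time-change and reflection operations commute path by path: S^{Θ^a(M)} = Θ^a(S^M). -/

import Mathlib

open MeasureTheory ProbabilityTheory Filter Finset
open scoped ENNReal NNReal

noncomputable section

/-- The quadratic variation `[s]_n` of a discrete path `s`. -/
def qv (s : ℕ → ℤ) (n : ℕ) : ℕ :=
  ∑ k ∈ Finset.range n, (s (k + 1) - s k).natAbs ^ 2

/-- Reflection of a discrete path at level `a`:
`Θ^a(s)_n = ∑_{k=1}^n (1_{k ≤ T_a(s)} - 1_{k > T_a(s)}) (s_k - s_{k-1})`,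
where `k ≤ T_a(s)` iff `s_j ≠ a` for every `j < k`. -/
def reflect (a : ℤ) (s : ℕ → ℤ) : ℕ → ℤ := fun n =>
  ∑ k ∈ Finset.range n, if ∀ j ≤ k, s j ≠ a then s (k + 1) - s k else s k - s (k + 1)

/-- A (deterministic) skip free path: starts at `0` and has increments in `{-1, 0, 1}`. -/
def SkipFreePath (s : ℕ → ℤ) : Prop :=
  s 0 = 0 ∧ ∀ n, s (n + 1) - s n = 1 ∨ s (n + 1) - s n = 0 ∨ s (n + 1) - s n = -1

/-- The uniform law on `{-1, +1} ⊆ ℤ`. -/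
def bern : Measure ℤ :=
  (2 : ℝ≥0∞)⁻¹ • Measure.dirac (1 : ℤ) + (2 : ℝ≥0∞)⁻¹ • Measure.dirac (-1 : ℤ)

/-- `S` is a symmetric Bernoulli random walk: `S_0 = 0` a.s. and the increments are
i.i.d. uniform on `{-1, +1}`. -/
def IsBernoulliRW {Ω : Type*} [MeasurableSpace Ω] (P : Measure Ω) (S : ℕ → Ω → ℤ) : Prop :=
  (∀ᵐ ω ∂P, S 0 ω = 0) ∧
    iIndepFun (fun n ω => S (n + 1) ω - S n ω) P ∧
    ∀ n, Measure.map (fun ω => S (n + 1) ω - S n ω) P = bern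

/-- `M` is a discrete Ocone local martingale: it is equal in law to a symmetric Bernoulli
random walk time changed by an independent nondecreasing `ℕ`-valued process with
increments in `{0, 1}`. -/
def IsDiscreteOcone {Ω : Type*} [MeasurableSpace Ω] (P : Measure Ω) (M : ℕ → Ω → ℤ) : Prop :=
  ∃ (Ω' : Type) (_ : MeasurableSpace Ω') (P' : Measure Ω') (S : ℕ → Ω' → ℤ) (A : ℕ → Ω' → ℕ),
    IsProbabilityMeasure P' ∧ IsBernoulliRW P' S ∧
    (∀ ω, A 0 ω = 0) ∧ (∀ ω n, A (n + 1) ω = A n ω ∨ A (n + 1) ω = A n ω + 1) ∧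
    IndepFun (fun ω => (S · ω)) (fun ω => (A · ω)) P' ∧
    Measure.map (fun ω => (fun n => M n ω)) P
      = Measure.map (fun ω => (fun n => S (A n ω) ω)) P'

/-- The successive times at which the quadratic variation of `s` increases:
`τ_0 = 0` and `τ_{n+1} = inf {k > τ_n : [s]_k = n + 1}`, with `inf ∅ = τ_n`. -/
def tauP (s : ℕ → ℤ) : ℕ → ℕ
  | 0 => 0
  | n + 1 => max (tauP s n) (sInf {k | tauP s n < k ∧ qv s k = n + 1})

/-- The time-changed path `S^s = (s_{τ_n})_n`. -/
def SM (s : ℕ → ℤ) : ℕ → ℤ := fun n => s (tauP s n)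

lemma qv_succ' (s : ℕ → ℤ) (n : ℕ) :
    qv s (n + 1) = qv s n + (s (n + 1) - s n).natAbs ^ 2 :=
  Finset.sum_range_succ _ _

lemma qv_mono' (s : ℕ → ℤ) : Monotone (qv s) :=
  monotone_nat_of_le_succ fun n => by rw [qv_succ']; omega

lemma qv_step' {s : ℕ → ℤ} (hs : SkipFreePath s) (n : ℕ) :
    qv s (n + 1) = qv s n ∨ qv s (n + 1) = qv s n + 1 := by
  rw [qv_succ']
  rcases hs.2 n with h | h | h <;> rw [h] <;> simp

lemma qv_ivt {s : ℕ → ℤ} (hs : SkipFreePath s) {m m' c : ℕ} (hmm : m ≤ m')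
    (h1 : qv s m ≤ c) (h2 : c ≤ qv s m') : ∃ k, m ≤ k ∧ k ≤ m' ∧ qv s k = c := by
  induction m', hmm using Nat.le_induction with
  | base => exact ⟨m, le_rfl, le_rfl, le_antisymm h1 h2⟩
  | succ n hn ih =>
    by_cases h : c ≤ qv s n
    · obtain ⟨k, h1k, h2k, h3k⟩ := ih h
      exact ⟨k, h1k, h2k.trans (Nat.le_succ n), h3k⟩
    · refine ⟨n + 1, hn.trans (Nat.le_succ n), le_rfl, ?_⟩
      rcases qv_step' hs n with h' | h' <;> omega

lemma reflect_succ_sub (a : ℤ) (s : ℕ → ℤ) (k : ℕ) :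
    reflect a s (k + 1) - reflect a s k
      = if ∀ j ≤ k, s j ≠ a then s (k + 1) - s k else s k - s (k + 1) := by
  simp [reflect, Finset.sum_range_succ]

lemma qv_reflect (a : ℤ) (s : ℕ → ℤ) : qv (reflect a s) = qv s := by
  funext n
  unfold qv
  refine Finset.sum_congr rfl fun k _ => ?_
  rw [reflect_succ_sub]
  split_ifs
  · rfl
  · have h : s k - s (k + 1) = -(s (k + 1) - s k) := by ring
    rw [h, Int.natAbs_neg]

lemma tauP_succ (s : ℕ → ℤ) (n : ℕ) :
    tauP s (n + 1) = max (tauP s n) (sInf {k | tauP s n < k ∧ qv s k = n + 1}) := rfl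

lemma tauP_congr {s t : ℕ → ℤ} (h : qv s = qv t) : tauP s = tauP t := by
  have : ∀ n, tauP s n = tauP t n := by
    intro n
    induction n with
    | zero => rfl
    | succ n ih => rw [tauP_succ, tauP_succ, ih, h]
  exact funext this

lemma tauP_mono (s : ℕ → ℤ) : Monotone (tauP s) :=
  monotone_nat_of_le_succ fun n => le_max_left _ _

lemma qv_tauP_le {s : ℕ → ℤ} (n : ℕ) : qv s (tauP s n) ≤ n := by
  induction n with
  | zero => simp [tauP, qv]
  | succ n ih =>
    rw [tauP_succ]
    by_cases h : {k | tauP s n < k ∧ qv s k = n + 1}.Nonempty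
    · have hm := Nat.sInf_mem h
      rw [max_eq_right hm.1.le]
      exact hm.2.le
    · rw [Set.not_nonempty_iff_eq_empty] at h
      rw [h, Nat.sInf_empty, max_eq_left (Nat.zero_le _)]
      omega

/-- Every time `m` lies in the constancy interval of its qv level. -/
lemma tauP_qv_le {s : ℕ → ℤ} (hs : SkipFreePath s) (m : ℕ) :
    tauP s (qv s m) ≤ m ∧ s (tauP s (qv s m)) = s m := by
  induction m with
  | zero => simp [tauP, qv]
  | succ m ih =>
    rcases qv_step' hs m with h | h
    · have h0 : (s (m + 1) - s m).natAbs ^ 2 = 0 := by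
        have := qv_succ' s m; omega
      have hsm : s (m + 1) = s m := by
        have h1 : (s (m + 1) - s m).natAbs = 0 := by nlinarith
        have := Int.natAbs_eq_zero.mp h1
        omega
      rw [h, hsm]
      exact ⟨ih.1.trans (Nat.le_succ m), ih.2⟩
    · have hmem : m + 1 ∈ {k | tauP s (qv s m) < k ∧ qv s k = qv s m + 1} :=
        ⟨Nat.lt_succ_of_le ih.1, h⟩
      have hinf : sInf {k | tauP s (qv s m) < k ∧ qv s k = qv s m + 1} = m + 1 := by
        refine le_antisymm (Nat.sInf_le hmem) ?_
        by_contra hlt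
        push_neg at hlt
        have hm := Nat.sInf_mem ⟨m + 1, hmem⟩
        simp only [Set.mem_setOf_eq] at hm
        have : qv s (sInf {k | tauP s (qv s m) < k ∧ qv s k = qv s m + 1}) ≤ qv s m :=
          qv_mono' s (by omega)
        omega
      have ht : tauP s (qv s (m + 1)) = m + 1 := by
        rw [h, tauP_succ, hinf, max_eq_right (ih.1.trans (Nat.le_succ m))]
      rw [ht]
      exact ⟨le_rfl, rfl⟩

lemma qv_le_of_lt_tauP {s : ℕ → ℤ} (hs : SkipFreePath s) {n m : ℕ}
    (h1 : tauP s n ≤ m) (h2 : m < tauP s (n + 1)) : qv s m ≤ n := by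
  by_contra hq
  push_neg at hq
  obtain ⟨k, hk1, hk2, hk3⟩ := qv_ivt hs h1 ((qv_tauP_le n).trans (Nat.le_succ n)) hq
  have hkgt : tauP s n < k := by
    rcases lt_or_eq_of_le hk1 with h | h
    · exact h
    · exfalso; have := qv_tauP_le (s := s) n; rw [← h] at hk3; omega
  have : sInf {j | tauP s n < j ∧ qv s j = n + 1} ≤ k := Nat.sInf_le ⟨hkgt, hk3⟩
  have : tauP s (n + 1) ≤ m := by
    rw [tauP_succ]
    exact max_le h1 (le_trans this hk2)
  omega

/-- Sign equivalence: the path hits `a` by time `m` iff the time-changed path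
hits `a` by index `n`, whenever `τ_n ≤ m` and `qv s m ≤ n`. -/
lemma sign_iff {s : ℕ → ℤ} (hs : SkipFreePath s) (a : ℤ) {n m : ℕ}
    (h1 : tauP s n ≤ m) (h2 : qv s m ≤ n) :
    (∀ j ≤ m, s j ≠ a) ↔ (∀ j ≤ n, s (tauP s j) ≠ a) := by
  constructor
  · intro h j hj hja
    exact h (tauP s j) ((tauP_mono s hj).trans h1) hja
  · intro h j hj hja
    have hq : qv s j ≤ n := (qv_mono' s hj).trans h2
    have := (tauP_qv_le hs j).2
    exact h (qv s j) hq (by rw [this]; exact hja)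

/-- **Path-by-path commutation of time change and reflection.** For every deterministic
skip free path `s` and every `a ∈ {0, 1, 2}`, one has `S^{Θ^a(s)} = Θ^a(S^s)`. -/
theorem timeChange_reflect_comm (s : ℕ → ℤ) (hs : SkipFreePath s)
    (a : ℤ) (ha : a = 0 ∨ a = 1 ∨ a = 2) :
    ∀ n, SM (reflect a s) n = reflect a (SM s) n := by
  intro n
  have ht : tauP (reflect a s) = tauP s := tauP_congr (qv_reflect a s)
  show reflect a s (tauP (reflect a s) n) = reflect a (SM s) n
  rw [ht]
  induction n with
  | zero => simp [tauP, reflect]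
  | succ n ih =>
    have hmono : tauP s n ≤ tauP s (n + 1) := tauP_mono s (Nat.le_succ n)
    have hsplit : reflect a (SM s) (n + 1) = reflect a (SM s) n +
        (if ∀ j ≤ n, SM s j ≠ a then SM s (n + 1) - SM s n
         else SM s n - SM s (n + 1)) := by
      rw [reflect, Finset.sum_range_succ]; rfl
    rw [hsplit, ← ih]
    have hIco : reflect a s (tauP s (n + 1)) - reflect a s (tauP s n) =
        ∑ m ∈ Finset.Ico (tauP s n) (tauP s (n + 1)),
          (if ∀ j ≤ m, s j ≠ a then s (m + 1) - s m else s m - s (m + 1)) := by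
      rw [Finset.sum_Ico_eq_sub _ hmono]; rfl
    have hsigns : ∀ m ∈ Finset.Ico (tauP s n) (tauP s (n + 1)),
        ((∀ j ≤ m, s j ≠ a) ↔ (∀ j ≤ n, s (tauP s j) ≠ a)) := by
      intro m hm
      rw [Finset.mem_Ico] at hm
      exact sign_iff hs a hm.1 (qv_le_of_lt_tauP hs hm.1 hm.2)
    have htel : ∑ m ∈ Finset.Ico (tauP s n) (tauP s (n + 1)), (s (m + 1) - s m)
        = s (tauP s (n + 1)) - s (tauP s n) := by
      rw [Finset.sum_Ico_eq_sub _ hmono, Finset.sum_range_sub, Finset.sum_range_sub]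
      ring
    have hSM : ∀ k, SM s k = s (tauP s k) := fun k => rfl
    by_cases hc : ∀ j ≤ n, s (tauP s j) ≠ a
    · have hsum : ∑ m ∈ Finset.Ico (tauP s n) (tauP s (n + 1)),
          (if ∀ j ≤ m, s j ≠ a then s (m + 1) - s m else s m - s (m + 1))
          = s (tauP s (n + 1)) - s (tauP s n) := by
        rw [← htel]
        refine Finset.sum_congr rfl fun m hm => ?_
        rw [if_pos ((hsigns m hm).mpr hc)]
      have hif : (if ∀ j ≤ n, SM s j ≠ a then SM s (n + 1) - SM s n
          else SM s n - SM s (n + 1)) = s (tauP s (n + 1)) - s (tauP s n) := by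
        rw [if_pos (by simpa [hSM] using hc), hSM, hSM]
      rw [hif]
      have := hIco
      rw [hsum] at this
      linarith
    · have hsum : ∑ m ∈ Finset.Ico (tauP s n) (tauP s (n + 1)),
          (if ∀ j ≤ m, s j ≠ a then s (m + 1) - s m else s m - s (m + 1))
          = s (tauP s n) - s (tauP s (n + 1)) := by
        have : ∑ m ∈ Finset.Ico (tauP s n) (tauP s (n + 1)),
            (if ∀ j ≤ m, s j ≠ a then s (m + 1) - s m else s m - s (m + 1))
            = ∑ m ∈ Finset.Ico (tauP s n) (tauP s (n + 1)), -(s (m + 1) - s m) := by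
          refine Finset.sum_congr rfl fun m hm => ?_
          rw [if_neg (fun h => hc ((hsigns m hm).mp h))]
          ring
        rw [this, Finset.sum_neg_distrib, htel]
        ring
      have hif : (if ∀ j ≤ n, SM s j ≠ a then SM s (n + 1) - SM s n
          else SM s n - SM s (n + 1)) = s (tauP s n) - s (tauP s (n + 1)) := by
        rw [if_neg (by simpa [hSM] using hc), hSM, hSM]
      rw [hif]
      have := hIco
      rw [hsum] at this
      linarith
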